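/- Let $f$ be an S-unimodal map whose critical point $c$ is recurrent ($c\in\omega(c)$) and not periodic, and write $c_t=f^t(c)$. Define the sequence of closest approach times by $q(1)=1$ and $q(n+1)=\min\{t\in\mathbb{N}: c_t\in V_{c_{q(n)}}\}$; this sequence is well defined. For every $n\ge1$ such that the set $(V_{c_{q(n-1)}}\setminus V_{c_{q(n)}})\cap\mathcal{N}\cap[0,c)$ is nonempty, its supremum $x(n)$ is attained (it is a maximum, since the points $c_{q(n)}$ are not nice), $x(n)$ is a nice point, and one has $f^i(c)\notin V_{x(n)}$ for all $1\le i<q(n)$ while $f^{q(n)}(c)\in V_{c_{q(n)}}\subset V_{x(n)}$; consequently the first return map of $V_{x(n)}$ restricted to the central domain satisfies $R_{x(n)}|_{U_{x(n)}}=f^{q(n)}|_{U_{x(n)}}$. -/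

import Mathlib

open Set MeasureTheory Filter
open scoped Classical

noncomputable section

/-- The length (Lebesgue measure) of a set of reals, as a real number. -/
def len (S : Set ℝ) : ℝ := (volume S).toReal

/-- `J` contains a `δ`-scaled neighborhood of `I`: both components of `J \ I`
(the parts of `J` to the left and to the right of `I`) have length at least `δ * |I|`. -/
def ScaledNbhd (δ : ℝ) (I J : Set ℝ) : Prop :=
  I ⊆ J ∧ δ * len I ≤ len (J ∩ Iio (sInf I)) ∧ δ * len I ≤ len (J ∩ Ioi (sSup I))

/-- The Schwarzian derivative `Sf = f'''/f' - (3/2) (f''/f')²`. -/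
def schwarzianDeriv (f : ℝ → ℝ) (x : ℝ) : ℝ :=
  iteratedDeriv 3 f x / deriv f x - (3 / 2) * (iteratedDeriv 2 f x / deriv f x) ^ 2

/-- An S-unimodal map `f : [0,1] → [0,1]` with critical point `c`. -/
structure SUnimodal (f : ℝ → ℝ) (c : ℝ) : Prop where
  mapsTo : MapsTo f (Icc 0 1) (Icc 0 1)
  smooth : ContDiffOn ℝ 3 f (Icc 0 1)
  f_zero : f 0 = 0
  f_one : f 1 = 0
  c_mem : c ∈ Ioo (0 : ℝ) 1
  mono : StrictMonoOn f (Icc 0 c)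
  anti : StrictAntiOn f (Icc c 1)
  deriv_ne : ∀ x ∈ Icc (0 : ℝ) 1, x ≠ c → deriv f x ≠ 0
  nonflat : ∃ α : ℝ, 1 < α ∧ ∃ φ : ℝ → ℝ, ∃ U ∈ nhds c, ContDiffOn ℝ 3 φ U ∧
      φ c = 0 ∧ (∀ x ∈ U, deriv φ x ≠ 0) ∧ ∀ x ∈ U, f x = f c - |φ x| ^ α
  neg_schwarzian : ∀ x ∈ Icc (0 : ℝ) 1, x ≠ c → schwarzianDeriv f x < 0

/-- The point `τ(x)` on the opposite side of the critical point `c` with `f (τ x) = f x`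
(defaults to `x` itself when no such point exists). -/
def tauPt (f : ℝ → ℝ) (c x : ℝ) : ℝ :=
  if h : ∃ y ∈ Icc (0 : ℝ) 1, ((x < c ∧ c < y) ∨ (y < c ∧ c < x)) ∧ f y = f x then
    h.choose
  else x

/-- The open interval `V x` with endpoints `x` and `τ x`. -/
def Vv (f : ℝ → ℝ) (c x : ℝ) : Set ℝ :=
  Ioo (min x (tauPt f c x)) (max x (tauPt f c x))

/-- The set of nice points: `x ≠ c` such that `f^[n] x ∉ V x` for all `n ≥ 1`. -/
def NiceSet (f : ℝ → ℝ) (c : ℝ) : Set ℝ :=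
  {x | x ∈ Icc (0 : ℝ) 1 ∧ x ≠ c ∧ ∀ n : ℕ, 1 ≤ n → f^[n] x ∉ Vv f c x}

/-- The first time `k ≥ 1` at which the orbit of `y` enters `V x`
(first entry time / first return time). -/
def firstTime (f : ℝ → ℝ) (c x y : ℝ) : ℕ := sInf {k : ℕ | 1 ≤ k ∧ f^[k] y ∈ Vv f c x}

/-- The first return map to `V x` (also the transfer map on the transfer domain). -/
def Rmap (f : ℝ → ℝ) (c x y : ℝ) : ℝ := f^[firstTime f c x y] y

/-- The domain of the first return map to `V x`. -/
def RDom (f : ℝ → ℝ) (c x : ℝ) : Set ℝ :=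
  {y | y ∈ Vv f c x ∧ ∃ r : ℕ, 1 ≤ r ∧ f^[r] y ∈ Vv f c x}

/-- The central domain `U x`: the connected component of the domain of the
first return map to `V x` that contains the critical point `c`. -/
def Uc (f : ℝ → ℝ) (c x : ℝ) : Set ℝ := connectedComponentIn (RDom f c x) c

/-- `ψ x`: the endpoint of the central domain `U x` lying in `[0, c)`. -/
def psi (f : ℝ → ℝ) (c x : ℝ) : ℝ := sInf (Uc f c x)

/-- The transfer domain `C x`: points of `[0,1]` outside `V x` whose orbit enters `V x`. -/
def Cdom (f : ℝ → ℝ) (c x : ℝ) : Set ℝ :=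
  {y | y ∈ Icc (0 : ℝ) 1 \ Vv f c x ∧ ∃ k : ℕ, 1 ≤ k ∧ f^[k] y ∈ Vv f c x}

/-- `S x`: the connected component of the transfer domain `C x` containing the
critical value `f c`. -/
def Scomp (f : ℝ → ℝ) (c x : ℝ) : Set ℝ := connectedComponentIn (Cdom f c x) (f c)

/-- `I` is a connected component of the transfer domain `C x` with transfer time `n`. -/
def IsTransferComponent (f : ℝ → ℝ) (c x : ℝ) (I : Set ℝ) (n : ℕ) : Prop :=
  (∃ y ∈ Cdom f c x, I = connectedComponentIn (Cdom f c x) y) ∧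
  ∀ z ∈ I, firstTime f c x z = n

/-- `g` is monotone (increasing or decreasing) on `T`. -/
def MonoOrAnti (g : ℝ → ℝ) (T : Set ℝ) : Prop := MonotoneOn g T ∨ AntitoneOn g T

/-- `T` is the maximal interval containing `I` on which `g` is monotone. -/
def MaximalMonoExt (g : ℝ → ℝ) (I T : Set ℝ) : Prop :=
  I ⊆ T ∧ T.OrdConnected ∧ T ⊆ Icc 0 1 ∧ MonoOrAnti g T ∧
  ∀ T' : Set ℝ, T ⊆ T' → T'.OrdConnected → T' ⊆ Icc 0 1 → MonoOrAnti g T' → T' = T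

/-- The set `D` accumulates at the point `c`. -/
def AccumulatesAt (D : Set ℝ) (c : ℝ) : Prop :=
  ∀ ε > 0, ∃ x ∈ D, x ≠ c ∧ |x - c| < ε

/-- `f` has a periodic attractor: a periodic orbit whose basin of attraction
contains an open set. -/
def HasPeriodicAttractor (f : ℝ → ℝ) : Prop :=
  ∃ p ∈ Icc (0 : ℝ) 1, ∃ m : ℕ, 1 ≤ m ∧ f^[m] p = p ∧
    ∃ O : Set ℝ, IsOpen O ∧ O.Nonempty ∧ O ⊆ Icc 0 1 ∧
      ∀ y ∈ O, Tendsto (fun n => f^[n * m] y) atTop (nhds p)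

/-- The critical point `c` is recurrent: `c ∈ ω(c)`. -/
def RecurrentPt (f : ℝ → ℝ) (c : ℝ) : Prop :=
  ∀ ε > 0, ∃ n : ℕ, 1 ≤ n ∧ |f^[n] c - c| < ε

/-- `D ⊆ 𝒩` and `K` witness the Weak-Markov-Property of `f`: `D` is a set of nice
points accumulating at `c` and there is a full measure set `G ⊆ [0,1]` such that
every `x ∈ G` can be mapped, inside an interval `I ∋ x`, diffeomorphically onto `V y`
by some iterate `f^t`, with distortion bounded by `K`, for every `y ∈ D`. -/
def WMPwitness (f : ℝ → ℝ) (c : ℝ) (D : Set ℝ) (K : ℝ) : Prop :=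
  D ⊆ NiceSet f c ∧ AccumulatesAt D c ∧
  ∃ G : Set ℝ, G ⊆ Icc 0 1 ∧ volume (Icc (0 : ℝ) 1 \ G) = 0 ∧
    ∀ x ∈ G, ∀ y ∈ D, ∃ t : ℕ, ∃ I : Set ℝ, x ∈ I ∧ I.OrdConnected ∧
      InjOn (f^[t]) I ∧ f^[t] '' I = Vv f c y ∧ (∀ z ∈ I, deriv (f^[t]) z ≠ 0) ∧
      ∀ u ∈ I, ∀ v ∈ I, |deriv (f^[t]) u| ≤ K * |deriv (f^[t]) v|

/-- `J` is a restrictive (renormalization) interval of period `n` for `f`. -/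
def IsRestrictive (f : ℝ → ℝ) (c : ℝ) (n : ℕ) (J : Set ℝ) : Prop :=
  2 ≤ n ∧ c ∈ J ∧ J.OrdConnected ∧ J ⊆ Icc 0 1 ∧ J ≠ Icc 0 1 ∧
  (interior J).Nonempty ∧ f^[n] '' J ⊆ J ∧
  ∀ i < n, ∀ j < n, i ≠ j → interior (f^[i] '' J) ∩ interior (f^[j] '' J) = ∅

/-- `f` is only finitely renormalizable. -/
def OnlyFinitelyRenormalizable (f : ℝ → ℝ) (c : ℝ) : Prop :=
  {n : ℕ | ∃ J : Set ℝ, IsRestrictive f c n J}.Finite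

/-- The interval spanned by a set of reals. -/
def hullInt (S : Set ℝ) : Set ℝ := Icc (sInf S) (sSup S)

end
section Helpers

variable {f : ℝ → ℝ} {c : ℝ}

lemma SU.cont (hf : SUnimodal f c) : ContinuousOn f (Icc 0 1) :=
  hf.smooth.continuousOn

lemma SU.iter_maps (hf : SUnimodal f c) (k : ℕ) :
    MapsTo f^[k] (Icc 0 1) (Icc 0 1) := hf.mapsTo.iterate k

lemma SU.iter_cont (hf : SUnimodal f c) (k : ℕ) :
    ContinuousOn f^[k] (Icc 0 1) := by
  induction k with
  | zero => simpa using continuousOn_id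
  | succ n ih =>
    rw [Function.iterate_succ]
    exact ih.comp (SU.cont hf) hf.mapsTo

lemma SU.f_pos (hf : SUnimodal f c) {x : ℝ} (hx : x ∈ Ioo (0:ℝ) 1) : 0 < f x := by
  rcases le_or_gt x c with h | h
  · have := hf.mono (by constructor <;> [exact le_refl 0; exact le_of_lt (lt_of_lt_of_le hx.1 h)])
      ⟨le_of_lt hx.1, h⟩ hx.1
    rwa [hf.f_zero] at this
  · have := hf.anti ⟨le_of_lt h, le_of_lt hx.2⟩ ⟨le_of_lt hf.c_mem.2, le_refl 1⟩ hx.2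
    rwa [hf.f_one] at this

lemma SU.f_lt_fc (hf : SUnimodal f c) {x : ℝ} (hx : x ∈ Icc (0:ℝ) 1) (hxc : x ≠ c) :
    f x < f c := by
  rcases lt_or_gt_of_ne hxc with h | h
  · exact hf.mono ⟨hx.1, le_of_lt h⟩ ⟨hx.1.trans (le_of_lt h), le_refl c⟩ h
  · exact hf.anti ⟨le_refl c, (le_of_lt h).trans hx.2⟩ ⟨le_of_lt h, hx.2⟩ h

lemma tau_exists (hf : SUnimodal f c) {x : ℝ} (hx : x ∈ Ioo (0:ℝ) 1) (hxc : x ≠ c) :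
    ∃ y ∈ Icc (0:ℝ) 1, ((x < c ∧ c < y) ∨ (y < c ∧ c < x)) ∧ f y = f x := by
  have hc := hf.c_mem
  have hfx0 : 0 < f x := SU.f_pos hf hx
  have hfxc : f x < f c := SU.f_lt_fc hf ⟨le_of_lt hx.1, le_of_lt hx.2⟩ hxc
  rcases lt_or_gt_of_ne hxc with h | h
  · -- x < c : find y ∈ (c, 1)
    have hIVT : Ioo (f 1) (f c) ⊆ f '' Ioo c 1 :=
      intermediate_value_Ioo' (le_of_lt hc.2)
        ((SU.cont hf).mono (Icc_subset_Icc (le_of_lt hc.1) (le_refl 1)))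
    have : f x ∈ Ioo (f 1) (f c) := by rw [hf.f_one]; exact ⟨hfx0, hfxc⟩
    obtain ⟨y, hy, hfy⟩ := hIVT this
    exact ⟨y, ⟨le_of_lt (hc.1.trans hy.1), le_of_lt hy.2⟩, Or.inl ⟨h, hy.1⟩, hfy⟩
  · have hIVT : Ioo (f 0) (f c) ⊆ f '' Ioo 0 c :=
      intermediate_value_Ioo (le_of_lt hc.1)
        ((SU.cont hf).mono (Icc_subset_Icc (le_refl 0) (le_of_lt hc.2)))
    have : f x ∈ Ioo (f 0) (f c) := by rw [hf.f_zero]; exact ⟨hfx0, hfxc⟩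
    obtain ⟨y, hy, hfy⟩ := hIVT this
    exact ⟨y, ⟨le_of_lt hy.1, le_of_lt (hy.2.trans hc.2)⟩, Or.inr ⟨hy.2, h⟩, hfy⟩

lemma tau_spec (hf : SUnimodal f c) {x : ℝ} (hx : x ∈ Ioo (0:ℝ) 1) (hxc : x ≠ c) :
    tauPt f c x ∈ Ioo (0:ℝ) 1 ∧
      ((x < c ∧ c < tauPt f c x) ∨ (tauPt f c x < c ∧ c < x)) ∧
      f (tauPt f c x) = f x := by
  have h := tau_exists hf hx hxc
  have hspec := h.choose_spec
  have hdef : tauPt f c x = h.choose := by rw [tauPt, dif_pos h]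
  obtain ⟨hy1, hy2, hy3⟩ := hspec
  rw [← hdef] at hy1 hy2 hy3
  have hfx0 : 0 < f x := SU.f_pos hf hx
  have hfx1 : f x < f c := SU.f_lt_fc hf ⟨le_of_lt hx.1, le_of_lt hx.2⟩ hxc
  refine ⟨⟨?_, ?_⟩, hy2, hy3⟩
  · rcases hy1.1.eq_or_lt' with h0 | h0
    · exfalso; rw [h0, hf.f_zero] at hy3; exact absurd hy3.symm (ne_of_gt hfx0)
    · exact h0
  · rcases hy1.2.eq_or_lt with h1 | h1
    · exfalso; rw [h1, hf.f_one] at hy3; exact absurd hy3.symm (ne_of_gt hfx0)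
    · exact h1

lemma tau_uniq (hf : SUnimodal f c) {x y : ℝ} (hx : x ∈ Ioo (0:ℝ) 1) (hxc : x ≠ c)
    (hy : y ∈ Icc (0:ℝ) 1) (hside : (x < c ∧ c < y) ∨ (y < c ∧ c < x))
    (hfy : f y = f x) : y = tauPt f c x := by
  obtain ⟨ht1, ht2, ht3⟩ := tau_spec hf hx hxc
  rcases hside with ⟨hxlt, hylt⟩ | ⟨hylt, hxlt⟩
  · rcases ht2 with ⟨-, htc⟩ | ⟨-, hcx⟩
    · exact hf.anti.injOn ⟨le_of_lt hylt, hy.2⟩ ⟨le_of_lt htc, le_of_lt ht1.2⟩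
        (by rw [hfy, ht3])
    · exact absurd hxlt (not_lt.2 (le_of_lt hcx))
  · rcases ht2 with ⟨hxc', -⟩ | ⟨htc, -⟩
    · exact absurd hxlt (not_lt.2 (le_of_lt hxc'))
    · exact hf.mono.injOn ⟨hy.1, le_of_lt hylt⟩ ⟨le_of_lt ht1.1, le_of_lt htc⟩
        (by rw [hfy, ht3])

end Helpers
section Helpers2

variable {f : ℝ → ℝ} {c : ℝ}

lemma V_eq (hf : SUnimodal f c) {x : ℝ} (hx : x ∈ Ioo (0:ℝ) 1) (hxc : x ≠ c) :
    ∃ a b : ℝ, Vv f c x = Ioo a b ∧ a ∈ Ioo (0:ℝ) 1 ∧ b ∈ Ioo (0:ℝ) 1 ∧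
      a < c ∧ c < b ∧ f a = f x ∧ f b = f x ∧ ({a, b} : Set ℝ) = {x, tauPt f c x} := by
  obtain ⟨ht1, ht2, ht3⟩ := tau_spec hf hx hxc
  rcases ht2 with ⟨h1, h2⟩ | ⟨h1, h2⟩
  · refine ⟨x, tauPt f c x, ?_, hx, ht1, h1, h2, rfl, ht3, rfl⟩
    rw [Vv, min_eq_left (le_of_lt (h1.trans h2)), max_eq_right (le_of_lt (h1.trans h2))]
  · refine ⟨tauPt f c x, x, ?_, ht1, hx, h1, h2, ht3, rfl, ?_⟩
    · rw [Vv, min_eq_right (le_of_lt (h1.trans h2)), max_eq_left (le_of_lt (h1.trans h2))]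
    · exact Set.pair_comm _ _

lemma mem_V_iff (hf : SUnimodal f c) {x : ℝ} (hx : x ∈ Ioo (0:ℝ) 1) (hxc : x ≠ c)
    {z : ℝ} (hz : z ∈ Icc (0:ℝ) 1) : z ∈ Vv f c x ↔ f x < f z := by
  obtain ⟨a, b, hV, ha, hb, hac, hcb, hfa, hfb, -⟩ := V_eq hf hx hxc
  rw [hV]
  constructor
  · rintro ⟨h1, h2⟩
    rcases le_or_gt z c with hzc | hzc
    · rw [← hfa]; exact hf.mono ⟨le_of_lt ha.1, le_of_lt hac⟩ ⟨hz.1, hzc⟩ h1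
    · rw [← hfb]; exact hf.anti ⟨le_of_lt hzc, hz.2⟩ ⟨le_of_lt hcb, le_of_lt hb.2⟩ h2
  · intro hfz
    rcases le_or_gt z c with hzc | hzc
    · refine ⟨?_, hzc.trans_lt hcb⟩
      by_contra hle
      push_neg at hle
      have : f z ≤ f a := by
        rcases hle.eq_or_lt with he | hl
        · rw [he]
        · exact le_of_lt (hf.mono ⟨hz.1, hzc⟩ ⟨le_of_lt ha.1, le_of_lt hac⟩ hl)
      rw [hfa] at this; exact absurd hfz (not_lt.2 this)
    · refine ⟨hac.trans hzc, ?_⟩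
      by_contra hle
      push_neg at hle
      have : f z ≤ f b := by
        rcases hle.eq_or_lt with he | hl
        · rw [← he]
        · exact le_of_lt (hf.anti ⟨le_of_lt hcb, le_of_lt hb.2⟩ ⟨le_of_lt hzc, hz.2⟩ hl)
      rw [hfb] at this; exact absurd hfz (not_lt.2 this)

lemma V_subs_Ioo (hf : SUnimodal f c) {x : ℝ} (hx : x ∈ Ioo (0:ℝ) 1) (hxc : x ≠ c) :
    Vv f c x ⊆ Ioo (0:ℝ) 1 := by
  obtain ⟨a, b, hV, ha, hb, -, -, -, -, -⟩ := V_eq hf hx hxc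
  rw [hV]
  exact fun z hz => ⟨ha.1.trans hz.1, hz.2.trans hb.2⟩

lemma V_subs_Icc (hf : SUnimodal f c) {x : ℝ} (hx : x ∈ Ioo (0:ℝ) 1) (hxc : x ≠ c) :
    Vv f c x ⊆ Icc (0:ℝ) 1 :=
  (V_subs_Ioo hf hx hxc).trans Ioo_subset_Icc_self

lemma c_mem_V (hf : SUnimodal f c) {x : ℝ} (hx : x ∈ Ioo (0:ℝ) 1) (hxc : x ≠ c) :
    c ∈ Vv f c x := by
  obtain ⟨a, b, hV, -, -, hac, hcb, -, -, -⟩ := V_eq hf hx hxc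
  rw [hV]; exact ⟨hac, hcb⟩

lemma V_mono (hf : SUnimodal f c) {x y : ℝ} (hx : x ∈ Ioo (0:ℝ) 1) (hxc : x ≠ c)
    (hy : y ∈ Ioo (0:ℝ) 1) (hyc : y ≠ c) (hfle : f x ≤ f y) :
    Vv f c y ⊆ Vv f c x := by
  intro z hz
  have hz1 : z ∈ Icc (0:ℝ) 1 := V_subs_Icc hf hy hyc hz
  rw [mem_V_iff hf hy hyc hz1] at hz
  rw [mem_V_iff hf hx hxc hz1]
  exact lt_of_le_of_lt hfle hz

lemma ball_sub_V (hf : SUnimodal f c) {x : ℝ} (hx : x ∈ Ioo (0:ℝ) 1) (hxc : x ≠ c) :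
    ∃ ε > 0, ∀ z : ℝ, |z - c| < ε → z ∈ Vv f c x := by
  obtain ⟨a, b, hV, -, -, hac, hcb, -, -, -⟩ := V_eq hf hx hxc
  refine ⟨min (c - a) (b - c), lt_min (by linarith) (by linarith), fun z hz => ?_⟩
  rw [abs_lt] at hz
  have h1 := hz.1
  have h2 := hz.2
  have := min_le_left (c - a) (b - c)
  have := min_le_right (c - a) (b - c)
  rw [hV]
  constructor <;> linarith

lemma iter_tau (hf : SUnimodal f c) {x : ℝ} (hx : x ∈ Ioo (0:ℝ) 1) (hxc : x ≠ c)
    {i : ℕ} (hi : 1 ≤ i) : f^[i] (tauPt f c x) = f^[i] x := by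
  obtain ⟨i, rfl⟩ := Nat.exists_eq_add_of_le hi
  rw [add_comm, Function.iterate_add_apply, Function.iterate_add_apply]
  simp only [Function.iterate_one]
  rw [(tau_spec hf hx hxc).2.2]

lemma tau_tau (hf : SUnimodal f c) {x : ℝ} (hx : x ∈ Ioo (0:ℝ) 1) (hxc : x ≠ c) :
    tauPt f c (tauPt f c x) = x := by
  obtain ⟨ht1, ht2, ht3⟩ := tau_spec hf hx hxc
  have htc : tauPt f c x ≠ c := by
    rcases ht2 with ⟨-, h⟩ | ⟨h, -⟩
    · exact ne_of_gt h
    · exact ne_of_lt h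
  refine (tau_uniq hf ht1 htc ⟨le_of_lt hx.1, le_of_lt hx.2⟩ ?_ ht3.symm).symm
  rcases ht2 with ⟨h1, h2⟩ | ⟨h1, h2⟩
  · exact Or.inr ⟨h1, h2⟩
  · exact Or.inl ⟨h1, h2⟩

lemma V_tau (hf : SUnimodal f c) {x : ℝ} (hx : x ∈ Ioo (0:ℝ) 1) (hxc : x ≠ c) :
    Vv f c (tauPt f c x) = Vv f c x := by
  rw [Vv, Vv, tau_tau hf hx hxc, min_comm, max_comm]

end Helpers2
section Helpers3

variable {f : ℝ → ℝ} {c : ℝ}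

lemma rec_large (hf : SUnimodal f c) (hrec : RecurrentPt f c)
    (hnp : ∀ n : ℕ, 1 ≤ n → f^[n] c ≠ c) (ε : ℝ) (hε : 0 < ε) (N : ℕ) :
    ∃ n : ℕ, N ≤ n ∧ 1 ≤ n ∧ |f^[n] c - c| < ε := by
  classical
  set s := (Finset.Ico 1 N).image (fun j => |f^[j] c - c|) with hs
  set δ := if h : s.Nonempty then min ε (s.min' h) else ε with hδ
  have hδpos : 0 < δ := by
    rw [hδ]
    split_ifs with h
    · refine lt_min hε ?_
      have hmem := s.min'_mem h
      have hmem' : s.min' h ∈ Finset.image (fun j => |f^[j] c - c|) (Finset.Ico 1 N) := hmem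
      simp only [Finset.mem_image, Finset.mem_Ico] at hmem'
      replace hmem := hmem'
      obtain ⟨j, ⟨hj1, -⟩, hj2⟩ := hmem
      rw [← hj2]
      exact abs_pos.2 (sub_ne_zero.2 (hnp j hj1))
    · exact hε
  have hδε : δ ≤ ε := by
    rw [hδ]; split_ifs with h
    · exact min_le_left _ _
    · exact le_refl _
  obtain ⟨n, hn1, hn2⟩ := hrec δ hδpos
  refine ⟨n, ?_, hn1, lt_of_lt_of_le hn2 hδε⟩
  by_contra hlt
  push_neg at hlt
  have hmem : |f^[n] c - c| ∈ s := by
    rw [hs]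
    exact Finset.mem_image.2 ⟨n, Finset.mem_Ico.2 ⟨hn1, hlt⟩, rfl⟩
  have hne : s.Nonempty := ⟨_, hmem⟩
  have : δ ≤ |f^[n] c - c| := by
    rw [hδ, dif_pos hne]
    exact (min_le_right _ _).trans (s.min'_le _ hmem)
  exact absurd hn2 (not_lt.2 this)

lemma no_zero (hf : SUnimodal f c) (hrec : RecurrentPt f c)
    (hnp : ∀ n : ℕ, 1 ≤ n → f^[n] c ≠ c) (k : ℕ) : f^[k] c ≠ 0 := by
  intro hk0
  have hk1 : 1 ≤ k := by
    rcases Nat.eq_zero_or_pos k with h | h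
    · rw [h] at hk0; simp at hk0; exact absurd hk0 (ne_of_gt hf.c_mem.1)
    · exact h
  have hall : ∀ j, k ≤ j → f^[j] c = 0 := by
    intro j hj
    obtain ⟨i, rfl⟩ := Nat.exists_eq_add_of_le hj
    rw [add_comm, Function.iterate_add_apply, hk0]
    induction i with
    | zero => simp
    | succ m ih =>
        rw [Function.iterate_succ_apply', ih (by omega), hf.f_zero]
  obtain ⟨n, hn1, hn2, hn3⟩ := rec_large hf hrec hnp c hf.c_mem.1 k
  rw [hall n hn1] at hn3
  rw [abs_sub_comm, sub_zero, abs_of_pos hf.c_mem.1] at hn3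
  exact lt_irrefl c hn3

lemma orbit_Ioo (hf : SUnimodal f c) (hrec : RecurrentPt f c)
    (hnp : ∀ n : ℕ, 1 ≤ n → f^[n] c ≠ c) (k : ℕ) : f^[k] c ∈ Ioo (0:ℝ) 1 := by
  have hmem : f^[k] c ∈ Icc (0:ℝ) 1 :=
    SU.iter_maps hf k ⟨le_of_lt hf.c_mem.1, le_of_lt hf.c_mem.2⟩
  refine ⟨lt_of_le_of_ne hmem.1 (Ne.symm (no_zero hf hrec hnp k)), ?_⟩
  rcases hmem.2.eq_or_lt with h | h
  · exfalso
    have : f^[k+1] c = 0 := by rw [Function.iterate_succ_apply', h, hf.f_one]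
    exact no_zero hf hrec hnp (k+1) this
  · exact h

lemma entry_nonempty (hf : SUnimodal f c) (hrec : RecurrentPt f c)
    (hnp : ∀ n : ℕ, 1 ≤ n → f^[n] c ≠ c) {x : ℝ} (hx : x ∈ Ioo (0:ℝ) 1) (hxc : x ≠ c)
    (N : ℕ) : ∃ t, N ≤ t ∧ 1 ≤ t ∧ f^[t] c ∈ Vv f c x := by
  obtain ⟨ε, hε, hball⟩ := ball_sub_V hf hx hxc
  obtain ⟨n, hn1, hn2, hn3⟩ := rec_large hf hrec hnp ε hε N
  exact ⟨n, hn1, hn2, hball _ hn3⟩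

/-- `f^[k] c` is not nice, together with an explicit return witness. -/
lemma orbit_not_nice (hf : SUnimodal f c) (hrec : RecurrentPt f c)
    (hnp : ∀ n : ℕ, 1 ≤ n → f^[n] c ≠ c) {k : ℕ} (hk : 1 ≤ k) :
    (∃ j, 1 ≤ j ∧ f^[j] (f^[k] c) ∈ Vv f c (f^[k] c)) ∧ f^[k] c ∉ NiceSet f c := by
  have hIoo := orbit_Ioo hf hrec hnp k
  have hne : f^[k] c ≠ c := hnp k hk
  obtain ⟨t, ht1, ht2, ht3⟩ := entry_nonempty hf hrec hnp hIoo hne (k + 1)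
  have hj : f^[t - k] (f^[k] c) ∈ Vv f c (f^[k] c) := by
    rw [← Function.iterate_add_apply, Nat.sub_add_cancel (le_of_lt (Nat.lt_of_succ_le ht1))]
    exact ht3
  have hj1 : 1 ≤ t - k := Nat.le_sub_of_add_le (by omega)
  refine ⟨⟨t - k, hj1, hj⟩, fun hnice => hnice.2.2 _ hj1 hj⟩

end Helpers3
section Helpers4

variable {f : ℝ → ℝ} {c : ℝ}

lemma absorb (hf : SUnimodal f c) {x : ℝ} (hx : x ∈ Ioo (0:ℝ) 1)
    (hnice : x ∈ NiceSet f c) {w : ℝ} {j : ℕ}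
    (hw : f^[j] w = x ∨ f^[j] w = tauPt f c x) :
    ∀ i, 1 ≤ i → f^[j + i] w ∉ Vv f c x := by
  intro i hi
  rw [add_comm, Function.iterate_add_apply]
  rcases hw with h | h
  · rw [h]; exact hnice.2.2 i hi
  · rw [h, iter_tau hf hx hnice.2.1 hi]; exact hnice.2.2 i hi

lemma RDom_subset_Icc (hf : SUnimodal f c) {x : ℝ} (hx : x ∈ Ioo (0:ℝ) 1)
    (hxc : x ≠ c) : RDom f c x ⊆ Icc (0:ℝ) 1 :=
  fun _ hz => V_subs_Icc hf hx hxc hz.1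

lemma ft_mem {x z : ℝ} (hz : z ∈ RDom f c x) :
    1 ≤ firstTime f c x z ∧ f^[firstTime f c x z] z ∈ Vv f c x :=
  Nat.sInf_mem hz.2

lemma ft_min {x z : ℝ} {k : ℕ} (hk : 1 ≤ k) (hmem : f^[k] z ∈ Vv f c x) :
    firstTime f c x z ≤ k :=
  Nat.sInf_le ⟨hk, hmem⟩

lemma time_const (hf : SUnimodal f c) {x : ℝ} (hx : x ∈ Ioo (0:ℝ) 1)
    (hnice : x ∈ NiceSet f c) :
    ∀ K : ℕ, ∀ z₁ z₂ : ℝ, z₁ ∈ RDom f c x → z₂ ∈ RDom f c x →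
      uIcc z₁ z₂ ⊆ RDom f c x →
      firstTime f c x z₁ ≤ K → firstTime f c x z₁ < firstTime f c x z₂ → False := by
  have hxc : x ≠ c := hnice.2.1
  intro K
  induction K using Nat.strong_induction_on with
  | _ K IH =>
    intro z₁ z₂ hz₁ hz₂ hsub hle hlt
    set k₁ := firstTime f c x z₁ with hk₁
    obtain ⟨hk₁1, hk₁V⟩ := ft_mem hz₁
    obtain ⟨hk₂1, hk₂V⟩ := ft_mem hz₂
    set k₂ := firstTime f c x z₂ with hk₂
    have h1 : f^[k₁] z₂ ∉ Vv f c x := fun hmem =>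
      absurd (ft_min hk₁1 hmem) (not_le.2 hlt)
    have h2 : ¬(f^[k₁] z₂ = x ∨ f^[k₁] z₂ = tauPt f c x) := by
      intro h
      have := absorb hf hx hnice h (k₂ - k₁) (by omega)
      rw [Nat.add_sub_cancel' (le_of_lt hlt)] at this
      exact this hk₂V
    obtain ⟨a, b, hV, ha, hb, hac, hcb, hfa, hfb, hpair⟩ := V_eq hf hx hxc
    have hab : ∀ y : ℝ, y = a ∨ y = b → y = x ∨ y = tauPt f c x := by
      intro y hy
      have : y ∈ ({a, b} : Set ℝ) := by rcases hy with h | h <;> simp [h]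
      rw [hpair] at this
      simpa using this
    have hgz₁ : f^[k₁] z₁ ∈ Ioo a b := by rw [← hV]; exact hk₁V
    have hgz₂ : f^[k₁] z₂ ∉ Ioo a b := by rw [← hV]; exact h1
    have hgz₂a : f^[k₁] z₂ ≠ a := fun h => h2 (hab _ (Or.inl h))
    have hgz₂b : f^[k₁] z₂ ≠ b := fun h => h2 (hab _ (Or.inr h))
    -- find the boundary value v crossed between z₁ and z₂
    have hv : ∃ v : ℝ, (v = a ∨ v = b) ∧ v ∈ uIcc (f^[k₁] z₁) (f^[k₁] z₂) := by
      rcases lt_or_ge (f^[k₁] z₂) a with h | h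
      · exact ⟨a, Or.inl rfl, Set.mem_uIcc.2 (Or.inr ⟨le_of_lt h, le_of_lt hgz₁.1⟩)⟩
      · have hgt : a < f^[k₁] z₂ := lt_of_le_of_ne h (Ne.symm hgz₂a)
        have hge : b ≤ f^[k₁] z₂ := by
          by_contra hb'
          push_neg at hb'
          exact hgz₂ ⟨hgt, hb'⟩
        have hgtb : b < f^[k₁] z₂ := lt_of_le_of_ne hge (Ne.symm hgz₂b)
        exact ⟨b, Or.inr rfl, Set.mem_uIcc.2 (Or.inl ⟨le_of_lt hgz₁.2, le_of_lt hgtb⟩)⟩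
    obtain ⟨v, hvab, hvmem⟩ := hv
    have hcont : ContinuousOn f^[k₁] (uIcc z₁ z₂) :=
      (SU.iter_cont hf k₁).mono (hsub.trans (RDom_subset_Icc hf hx hxc))
    obtain ⟨w, hw, hgw⟩ := intermediate_value_uIcc hcont hvmem
    have hwR : w ∈ RDom f c x := hsub hw
    obtain ⟨hr1, hrV⟩ := ft_mem hwR
    set r := firstTime f c x w with hr
    have hrk : r < k₁ := by
      by_contra hge
      push_neg at hge
      rcases hge.eq_or_lt with he | hlt'
      · have hv' : f^[r] w = v := by rw [← he]; exact hgw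
        rw [hV, hv'] at hrV
        rcases hvab with h | h
        · rw [h] at hrV; exact lt_irrefl a hrV.1
        · rw [h] at hrV; exact lt_irrefl b hrV.2
      · have := absorb hf hx hnice
          (hab (f^[k₁] w) (by rw [hgw]; exact hvab)) (r - k₁) (by omega)
        rw [Nat.add_sub_cancel' (le_of_lt hlt')] at this
        exact this hrV
    exact IH r (lt_of_lt_of_le hrk hle) w z₁ hwR hz₁
      ((uIcc_subset_uIcc hw left_mem_uIcc).trans hsub) (le_refl r) (hrk.trans_le (le_refl k₁))

lemma Uc_time (hf : SUnimodal f c) {x : ℝ} (hx : x ∈ Ioo (0:ℝ) 1)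
    (hnice : x ∈ NiceSet f c) (hcR : c ∈ RDom f c x) {z : ℝ} (hz : z ∈ Uc f c x) :
    firstTime f c x z = firstTime f c x c := by
  have hzR : z ∈ RDom f c x := connectedComponentIn_subset _ _ hz
  have hcU : c ∈ Uc f c x := mem_connectedComponentIn hcR
  have hpre : IsPreconnected (Uc f c x) := isPreconnected_connectedComponentIn
  have hord : (Uc f c x).OrdConnected := hpre.ordConnected
  have hsub : uIcc z c ⊆ RDom f c x :=
    (hord.uIcc_subset hz hcU).trans (connectedComponentIn_subset _ _)
  by_contra hne
  rcases lt_or_gt_of_ne hne with h | h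
  · exact time_const hf hx hnice _ z c hzR hcR hsub (le_refl _) h
  · exact time_const hf hx hnice _ c z hcR hzR (by rwa [uIcc_comm] at hsub) (le_refl _) h

end Helpers4
/-- Auxiliary: an `IsOpen` lemma for `Vv`. -/
lemma V_open {f : ℝ → ℝ} {c x : ℝ} : IsOpen (Vv f c x) := by
  rw [Vv]; exact isOpen_Ioo

/-- The sequence of closest approach times. -/
noncomputable def qAux (f : ℝ → ℝ) (c : ℝ) : ℕ → ℕ
  | 0 => 0
  | 1 => 1
  | (n+2) => sInf {t | 1 ≤ t ∧ f^[t] c ∈ Vv f c (f^[qAux f c (n+1)] c)}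

lemma q_props {f : ℝ → ℝ} {c : ℝ} (hf : SUnimodal f c) (hrec : RecurrentPt f c)
    (hnp : ∀ n : ℕ, 1 ≤ n → f^[n] c ≠ c) :
    ∀ n : ℕ, 1 ≤ n → 1 ≤ qAux f c n ∧
      ({t : ℕ | 1 ≤ t ∧ f^[t] c ∈ Vv f c (f^[qAux f c n] c)}).Nonempty ∧
      qAux f c (n + 1) = sInf {t : ℕ | 1 ≤ t ∧ f^[t] c ∈ Vv f c (f^[qAux f c n] c)} := by
  intro n hn
  induction n with
  | zero => omega
  | succ n IH =>
    rcases Nat.eq_zero_or_pos n with h0 | h0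
    · subst h0
      have h1 : qAux f c 1 = 1 := rfl
      rw [h1]
      obtain ⟨t, -, ht1, ht2⟩ := entry_nonempty hf hrec hnp
        (orbit_Ioo hf hrec hnp 1) (hnp 1 le_rfl) 0
      exact ⟨le_rfl, ⟨t, ht1, ht2⟩, rfl⟩
    · obtain ⟨hq1, hne, heq⟩ := IH h0
      have hmem := Nat.sInf_mem hne
      rw [← heq] at hmem
      have hq1' : 1 ≤ qAux f c (n + 1) := hmem.1
      obtain ⟨t, -, ht1, ht2⟩ := entry_nonempty hf hrec hnp
        (orbit_Ioo hf hrec hnp (qAux f c (n+1))) (hnp _ hq1') 0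
      refine ⟨hq1', ⟨t, ht1, ht2⟩, ?_⟩
      show qAux f c (n + 2) = _
      rfl
/-- **Closest approach construction.** Let `f` be an S-unimodal map whose critical point
`c` is recurrent and not periodic, and write `c_t = f^[t] c`. The sequence of closest
approach times `q 1 = 1`, `q (n+1) = min {t : c_t ∈ V (c_(q n))}` is well defined, and
whenever the set `A = (V (c_(q (n-1))) \ V (c_(q n))) ∩ 𝒩 ∩ [0,c)` is nonempty its
supremum `x n = sSup A` is attained (the points `c_(q n)` are not nice), `x n` is nice,
`f^[i] c ∉ V (x n)` for `1 ≤ i < q n` while `f^[q n] c ∈ V (x n)` and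
`V (c_(q n)) ⊆ V (x n)`; consequently `R_(x n)` restricted to the central domain
`U (x n)` is `f^[q n]`. -/
theorem closest_approach_sequence (f : ℝ → ℝ) (c : ℝ)
    (hf : SUnimodal f c) (hrec : RecurrentPt f c)
    (hnp : ∀ n : ℕ, 1 ≤ n → f^[n] c ≠ c) :
    ∃ q : ℕ → ℕ, q 1 = 1 ∧
      (∀ n : ℕ, 1 ≤ n →
        ({t : ℕ | 1 ≤ t ∧ f^[t] c ∈ Vv f c (f^[q n] c)}).Nonempty ∧
        q (n + 1) = sInf {t : ℕ | 1 ≤ t ∧ f^[t] c ∈ Vv f c (f^[q n] c)}) ∧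
      ∀ n : ℕ, 2 ≤ n → ∀ A : Set ℝ,
        A = (Vv f c (f^[q (n - 1)] c) \ Vv f c (f^[q n] c)) ∩ NiceSet f c ∩ Ico 0 c →
        A.Nonempty →
        f^[q n] c ∉ NiceSet f c ∧
        sSup A ∈ A ∧
        sSup A ∈ NiceSet f c ∧
        (∀ i : ℕ, 1 ≤ i → i < q n → f^[i] c ∉ Vv f c (sSup A)) ∧
        f^[q n] c ∈ Vv f c (sSup A) ∧
        Vv f c (f^[q n] c) ⊆ Vv f c (sSup A) ∧
        ∀ z ∈ Uc f c (sSup A), firstTime f c (sSup A) z = q n := by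

  classical
  have hc := hf.c_mem
  refine ⟨qAux f c, rfl, fun n hn => ⟨(q_props hf hrec hnp n hn).2.1,
    (q_props hf hrec hnp n hn).2.2⟩, ?_⟩
  intro n hn A hA hAne
  -- basic facts about q (n-1) and q n
  have hn1 : 1 ≤ n - 1 := by omega
  obtain ⟨hp1, hSne, hSdef⟩ := q_props hf hrec hnp (n - 1) hn1
  have hsucc : n - 1 + 1 = n := by omega
  rw [hsucc] at hSdef
  set p := qAux f c (n - 1) with hp
  set m := qAux f c n with hm
  have hmmem : m ∈ {t : ℕ | 1 ≤ t ∧ f^[t] c ∈ Vv f c (f^[p] c)} := by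
    rw [hSdef]; exact Nat.sInf_mem hSne
  have hm1 : 1 ≤ m := hmmem.1
  have hmVp : f^[m] c ∈ Vv f c (f^[p] c) := hmmem.2
  have hmmin : ∀ t : ℕ, 1 ≤ t → t < m → f^[t] c ∉ Vv f c (f^[p] c) := by
    intro t ht1 ht2 hmem
    have : m ≤ t := by rw [hSdef]; exact Nat.sInf_le ⟨ht1, hmem⟩
    omega
  have hcp_Ioo : f^[p] c ∈ Ioo (0:ℝ) 1 := orbit_Ioo hf hrec hnp p
  have hcp_ne : f^[p] c ≠ c := hnp p hp1
  have hcm_Ioo : f^[m] c ∈ Ioo (0:ℝ) 1 := orbit_Ioo hf hrec hnp m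
  have hcm_ne : f^[m] c ≠ c := hnp m hm1
  obtain ⟨hret, hnotnice⟩ := orbit_not_nice hf hrec hnp hm1
  -- endpoints of V_p and V_m
  obtain ⟨α, β, hVp, hα, hβ, hαc, hcβ, hfα, hfβ, -⟩ := V_eq hf hcp_Ioo hcp_ne
  obtain ⟨μ, ν, hVm, hμ, hν, hμc, hcν, hfμ, hfν, hpairm⟩ := V_eq hf hcm_Ioo hcm_ne
  -- membership in A, unfolded
  have hmemA : ∀ y : ℝ, y ∈ A ↔
      ((y ∈ Vv f c (f^[p] c) ∧ y ∉ Vv f c (f^[m] c)) ∧ y ∈ NiceSet f c ∧ y ∈ Ico 0 c) := by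
    intro y
    rw [hA]
    constructor
    · rintro ⟨⟨⟨h1, h2⟩, h3⟩, h4⟩; exact ⟨⟨h1, h2⟩, h3, h4⟩
    · rintro ⟨⟨h1, h2⟩, h3, h4⟩; exact ⟨⟨⟨h1, h2⟩, h3⟩, h4⟩
  obtain ⟨y₀, hy₀⟩ := hAne
  have hy₀' := (hmemA y₀).1 hy₀
  have hup : ∀ y ∈ A, y ≤ μ := by
    intro y hy
    have hy' := (hmemA y).1 hy
    have hyc : y < c := hy'.2.2.2
    by_contra hgt
    push_neg at hgt
    exact hy'.1.2 (by rw [hVm]; exact ⟨hgt, hyc.trans hcν⟩)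
  have hbdd : BddAbove A := ⟨μ, hup⟩
  set x := sSup A with hx
  have hx_le : x ≤ μ := csSup_le ⟨y₀, hy₀⟩ hup
  have hx_ge : y₀ ≤ x := le_csSup hbdd hy₀
  have hy₀α : α < y₀ := by
    have := hy₀'.1.1; rw [hVp] at this; exact this.1
  have hx_pos : 0 < x := hα.1.trans (hy₀α.trans_le hx_ge)
  have hx_lt_c : x < c := hx_le.trans_lt hμc
  have hx_Ioo : x ∈ Ioo (0:ℝ) 1 := ⟨hx_pos, hx_lt_c.trans hc.2⟩
  have hx_Icc : x ∈ Icc (0:ℝ) 1 := ⟨le_of_lt hx_pos, le_of_lt hx_Ioo.2⟩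
  have hx_ne : x ≠ c := ne_of_lt hx_lt_c
  have hx_Vp : x ∈ Vv f c (f^[p] c) := by
    rw [hVp]; exact ⟨hy₀α.trans_le hx_ge, hx_lt_c.trans hcβ⟩
  have hx_nVm : x ∉ Vv f c (f^[m] c) := by
    rw [hVm]; rintro ⟨h1, -⟩; exact absurd hx_le (not_le.2 h1)
  -- x = sSup A is nice
  have hx_nice : x ∈ NiceSet f c := by
    refine ⟨hx_Icc, hx_ne, ?_⟩
    intro k hk hmem
    have hcw : ContinuousWithinAt f^[k] (Icc 0 1) x := SU.iter_cont hf k x hx_Icc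
    have hev : {y : ℝ | f^[k] y ∈ Vv f c x} ∈ nhdsWithin x (Icc (0:ℝ) 1) := by
      have := hcw (V_open.mem_nhds hmem)
      rwa [Filter.mem_map] at this
    rw [Metric.mem_nhdsWithin_iff] at hev
    obtain ⟨δ, hδ, hball⟩ := hev
    obtain ⟨y, hyA, hylt⟩ := exists_lt_of_lt_csSup ⟨y₀, hy₀⟩
      (show x - δ < sSup A by rw [← hx]; linarith)
    have hy' := (hmemA y).1 hyA
    have hyx : y ≤ x := le_csSup hbdd hyA
    have hy_lt_c : y < c := hy'.2.2.2
    have hy_pos : 0 < y := by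
      have := hy'.1.1; rw [hVp] at this; exact hα.1.trans this.1
    have hy_Ioo : y ∈ Ioo (0:ℝ) 1 := ⟨hy_pos, hy_lt_c.trans hc.2⟩
    have hy_Icc : y ∈ Icc (0:ℝ) 1 := ⟨le_of_lt hy_pos, le_of_lt hy_Ioo.2⟩
    have hy_ne : y ≠ c := ne_of_lt hy_lt_c
    have hyball : y ∈ Metric.ball x δ := by
      rw [Metric.mem_ball, Real.dist_eq, abs_lt]
      constructor <;> linarith
    have hfky : f^[k] y ∈ Vv f c x := hball ⟨hyball, hy_Icc⟩
    have hVsub : Vv f c x ⊆ Vv f c y := by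
      refine V_mono hf hy_Ioo hy_ne hx_Ioo hx_ne ?_
      rcases hyx.eq_or_lt with he | hlt'
      · rw [he]
      · exact le_of_lt (hf.mono ⟨le_of_lt hy_pos, le_of_lt hy_lt_c⟩
          ⟨le_of_lt hx_pos, le_of_lt hx_lt_c⟩ hlt')
    exact hy'.2.1.2.2 k hk (hVsub hfky)
  have hx_A : x ∈ A := (hmemA x).2 ⟨⟨hx_Vp, hx_nVm⟩, hx_nice, le_of_lt hx_pos, hx_lt_c⟩
  -- V x ⊆ V p, hence no entry before time m
  have hVxVp : Vv f c x ⊆ Vv f c (f^[p] c) := by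
    refine V_mono hf hcp_Ioo hcp_ne hx_Ioo hx_ne ?_
    exact le_of_lt ((mem_V_iff hf hcp_Ioo hcp_ne hx_Icc).1 hx_Vp)
  have hno_entry : ∀ i : ℕ, 1 ≤ i → i < m → f^[i] c ∉ Vv f c x :=
    fun i h1 h2 hmem => hmmin i h1 h2 (hVxVp hmem)
  -- μ is not nice, so x < μ
  have hμ_or : μ = f^[m] c ∨ μ = tauPt f c (f^[m] c) := by
    have : μ ∈ ({μ, ν} : Set ℝ) := by simp
    rw [hpairm] at this
    simpa using this
  have hμ_not : μ ∉ NiceSet f c := by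
    rcases hμ_or with h | h
    · rw [h]; exact hnotnice
    · intro hnμ
      obtain ⟨j, hj1, hjV⟩ := hret
      refine hnμ.2.2 j hj1 ?_
      rw [h, iter_tau hf hcm_Ioo hcm_ne hj1, V_tau hf hcm_Ioo hcm_ne]
      exact hjV
  have hx_lt_μ : x < μ := by
    rcases hx_le.eq_or_lt with he | h
    · exact absurd (he ▸ hx_nice) hμ_not
    · exact h
  -- f x < f (f^[m] c)
  have hfxm : f x < f (f^[m] c) := by
    rw [← hfμ]
    exact hf.mono ⟨le_of_lt hx_pos, le_of_lt hx_lt_c⟩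
      ⟨le_of_lt hμ.1, le_of_lt hμc⟩ hx_lt_μ
  have hcm_Icc : f^[m] c ∈ Icc (0:ℝ) 1 := ⟨le_of_lt hcm_Ioo.1, le_of_lt hcm_Ioo.2⟩
  have hcmVx : f^[m] c ∈ Vv f c x := (mem_V_iff hf hx_Ioo hx_ne hcm_Icc).2 hfxm
  have hVmVx : Vv f c (f^[m] c) ⊆ Vv f c x :=
    V_mono hf hx_Ioo hx_ne hcm_Ioo hcm_ne (le_of_lt hfxm)
  -- the first return time on the central domain is m
  have hcR : c ∈ RDom f c x := ⟨c_mem_V hf hx_Ioo hx_ne, m, hm1, hcmVx⟩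
  have htc : firstTime f c x c = m := by
    obtain ⟨h1, hV⟩ := ft_mem hcR
    have hle : firstTime f c x c ≤ m := ft_min hm1 hcmVx
    rcases hle.eq_or_lt with he | hlt'
    · exact he
    · exact absurd hV (hno_entry _ h1 hlt')
  refine ⟨hnotnice, hx_A, hx_nice, hno_entry, hcmVx, hVmVx, fun z hz => ?_⟩
  rw [Uc_time hf hx_Ioo hx_nice hcR hz, htc]
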